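/- Let f₁ and f₂ be non-constant functions of class H, let c₁, c₂ > 0 and let c₃, c₄, c₅, c₆ be real numbers with c₃·c₅ < 0. Define f(x) = c₁·f₁(c₃x + c₄) + c₂·f₂(c₅x + c₆). Then the set F = argmax_{x ∈ ℝ} f(x) of global maximizers of f is a nonempty compact interval in ℝ (possibly a single point). -/

import Mathlib

/-- A concave function on ℝ that is eventually constant attains its maximum at `xb`. -/
lemma auxH_le (f : ℝ → ℝ) (hc : ConcaveOn ℝ Set.univ f) (xb : ℝ)
    (hxb : ∀ y, xb ≤ y → f y = f xb) : ∀ y, f y ≤ f xb := by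
  intro y
  rcases le_or_gt xb y with h | h
  · exact (hxb y h).le
  · have h2 : f (2 * xb - y) = f xb := hxb _ (by linarith)
    have hcc := hc.2 (Set.mem_univ y) (Set.mem_univ (2 * xb - y))
      (by norm_num : (0:ℝ) ≤ 1/2) (by norm_num : (0:ℝ) ≤ 1/2) (by norm_num)
    have he : (1/2 : ℝ) • y + (1/2 : ℝ) • (2 * xb - y) = xb := by
      simp only [smul_eq_mul]; ring
    rw [he] at hcc
    simp only [smul_eq_mul] at hcc
    linarith

/-- Such a function is monotone. -/
lemma auxH_mono (f : ℝ → ℝ) (hc : ConcaveOn ℝ Set.univ f) (xb : ℝ)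
    (hxb : ∀ y, xb ≤ y → f y = f xb) : Monotone f := by
  intro a b hab
  rcases eq_or_lt_of_le hab with rfl | hab'
  · exact le_refl _
  rcases le_or_gt xb b with h | h
  · rw [hxb b h]; exact auxH_le f hc xb hxb a
  · -- a < b < xb
    have hax : a < xb := lt_trans hab' h
    set t : ℝ := (xb - b) / (xb - a) with ht
    have hden : (0:ℝ) < xb - a := by linarith
    have ht0 : 0 ≤ t := div_nonneg (by linarith) hden.le
    have ht1 : t ≤ 1 := (div_le_one hden).mpr (by linarith)
    have hcc := hc.2 (Set.mem_univ a) (Set.mem_univ xb) ht0 (by linarith : 0 ≤ 1 - t)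
      (by ring)
    have he : t • a + (1 - t) • xb = b := by
      simp only [smul_eq_mul]
      linear_combination (-1 : ℝ) * div_mul_cancel₀ (xb - b) hden.ne'
    rw [he] at hcc
    simp only [smul_eq_mul] at hcc
    have hfa : f a ≤ f xb := auxH_le f hc xb hxb a
    nlinarith [hcc, hfa, ht0, ht1]

/-- Linear upper bound with positive slope, plus a constant upper bound. -/
lemma auxH_lin (f : ℝ → ℝ) (hc : ConcaveOn ℝ Set.univ f) (xb : ℝ)
    (hxb : ∀ y, xb ≤ y → f y = f xb) (hnc : ∃ a b : ℝ, f a ≠ f b) :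
    ∃ m k : ℝ, 0 < m ∧ ∀ z, f z ≤ m * z + k ∧ f z ≤ k := by
  obtain ⟨a0, b0, hne⟩ := hnc
  have hmono := auxH_mono f hc xb hxb
  -- produce a < b with f a < f b
  obtain ⟨a, b, hab, hfab⟩ : ∃ a b : ℝ, a < b ∧ f a < f b := by
    rcases lt_trichotomy a0 b0 with h | h | h
    · exact ⟨a0, b0, h, lt_of_le_of_ne (hmono h.le) hne⟩
    · exact absurd (congrArg f h) hne
    · exact ⟨b0, a0, h, lt_of_le_of_ne (hmono h.le) (Ne.symm hne)⟩
  set m : ℝ := (f b - f a) / (b - a) with hm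
  have hba : (0:ℝ) < b - a := by linarith
  have hmpos : 0 < m := div_pos (by linarith) hba
  have key : ∀ z, z ≤ a → f z ≤ m * z + (f a * b - a * f b) / (b - a) := by
    intro z hz
    set t : ℝ := (b - a) / (b - z) with htdef
    have hbz : (0:ℝ) < b - z := by linarith
    have ht0 : 0 ≤ t := div_nonneg hba.le hbz.le
    have ht1 : t ≤ 1 := (div_le_one hbz).mpr (by linarith)
    have hcc := hc.2 (Set.mem_univ z) (Set.mem_univ b) ht0 (by linarith : 0 ≤ 1 - t) (by ring)
    have he : t • z + (1 - t) • b = a := by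
      simp only [smul_eq_mul]; linear_combination (-1 : ℝ) * div_mul_cancel₀ (b - a) hbz.ne'
    rw [he] at hcc
    simp only [smul_eq_mul] at hcc
    -- hcc : t * f z + (1 - t) * f b ≤ f a
    have h1 : t * (b - z) = b - a := by rw [htdef, div_mul_cancel₀ _ hbz.ne']
    have h2 : (1 - t) * (b - z) = a - z := by nlinarith [h1]
    have h1' : t * (b - z) * f z = (b - a) * f z := by rw [h1]
    have h2' : (1 - t) * (b - z) * f b = (a - z) * f b := by rw [h2]
    rw [hm, div_mul_eq_mul_div, ← add_div, le_div_iff₀ hba]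
    nlinarith [mul_le_mul_of_nonneg_right hcc hbz.le, h1', h2']
  -- now assemble
  refine ⟨m, max (max ((f a * b - a * f b) / (b - a)) (f xb - m * a)) (f xb), hmpos, fun z => ?_⟩
  have hle := auxH_le f hc xb hxb z
  constructor
  · rcases le_or_gt z a with hz | hz
    · have := key z hz
      have : (f a * b - a * f b) / (b - a) ≤ max (max ((f a * b - a * f b) / (b - a)) (f xb - m * a)) (f xb) :=
        le_max_of_le_left (le_max_left _ _)
      linarith [key z hz]
    · have h1 : f xb - m * a ≤ max (max ((f a * b - a * f b) / (b - a)) (f xb - m * a)) (f xb) :=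
        le_max_of_le_left (le_max_right _ _)
      nlinarith [mul_le_mul_of_nonneg_left hz.le hmpos.le]
  · exact hle.trans (le_max_right _ _)

lemma aux_main (f : ℝ → ℝ) (hconc : ConcaveOn ℝ Set.univ f) (hcont : Continuous f)
    (p q r s : ℝ) (hp : 0 < p) (hr : r < 0)
    (hb1 : ∀ x, f x ≤ p * x + q) (hb2 : ∀ x, f x ≤ r * x + s) :
    ({x : ℝ | ∀ y : ℝ, f y ≤ f x}).Nonempty ∧
    IsCompact {x : ℝ | ∀ y : ℝ, f y ≤ f x} ∧
    ∃ a b : ℝ, {x : ℝ | ∀ y : ℝ, f y ≤ f x} = Set.Icc a b := by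
  set S := {x : ℝ | ∀ y : ℝ, f y ≤ f x} with hS
  set A : ℝ := min ((f 0 - 1 - q) / p) 0 with hA
  set B : ℝ := max ((f 0 - 1 - s) / r) 0 with hB
  have h0AB : (0:ℝ) ∈ Set.Icc A B := ⟨min_le_right _ _, le_max_right _ _⟩
  obtain ⟨x₀, hx₀mem, hx₀max⟩ :=
    (isCompact_Icc : IsCompact (Set.Icc A B)).exists_isMaxOn ⟨0, h0AB⟩ hcont.continuousOn
  have hf0 : f 0 ≤ f x₀ := hx₀max h0AB
  have hglob : ∀ y, f y ≤ f x₀ := by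
    intro y
    by_cases hy : y ∈ Set.Icc A B
    · exact hx₀max hy
    · simp only [Set.mem_Icc, not_and_or, not_le] at hy
      rcases hy with hy | hy
      · have hy' : y < (f 0 - 1 - q) / p := lt_of_lt_of_le hy (min_le_left _ _)
        have : y * p < f 0 - 1 - q := (lt_div_iff₀ hp).mp hy'
        have := hb1 y
        nlinarith
      · have hy' : (f 0 - 1 - s) / r < y := lt_of_le_of_lt (le_max_left _ _) hy
        have : y * r < f 0 - 1 - s := (div_lt_iff_of_neg hr).mp hy'
        have := hb2 y
        nlinarith
  have hx₀S : x₀ ∈ S := hglob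
  have hSeq : S = f ⁻¹' Set.Ici (f x₀) := by
    ext x
    constructor
    · intro hx; exact hx x₀
    · intro hx y; exact (hglob y).trans hx
  have hclosed : IsClosed S := by rw [hSeq]; exact isClosed_Ici.preimage hcont
  have hsub : S ⊆ Set.Icc ((f 0 - q) / p) ((f 0 - s) / r) := by
    intro x hx
    have h1 : f 0 ≤ f x := hx 0
    have h2 := hb1 x
    have h3 := hb2 x
    constructor
    · rw [div_le_iff₀ hp]; linarith
    · rw [le_div_iff_of_neg hr]; linarith
  have hcomp : IsCompact S := IsCompact.of_isClosed_subset isCompact_Icc hclosed hsub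
  have hconvex : Convex ℝ S := by
    intro x hx y hy a b ha hb hab
    intro w
    have hcc := hconc.2 (Set.mem_univ x) (Set.mem_univ y) ha hb hab
    simp only [smul_eq_mul] at hcc ⊢
    have hw : a * f w + b * f w = f w := by linear_combination f w * hab
    linarith [hcc, hw, mul_le_mul_of_nonneg_left (hx w) ha,
      mul_le_mul_of_nonneg_left (hy w) hb]
  refine ⟨⟨x₀, hx₀S⟩, hcomp, sInf S, sSup S, ?_⟩
  apply Set.Subset.antisymm
  · intro x hx
    exact ⟨csInf_le hcomp.bddBelow hx, le_csSup hcomp.bddAbove hx⟩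
  · exact hconvex.ordConnected.out (hcomp.sInf_mem ⟨x₀, hx₀S⟩) (hcomp.sSup_mem ⟨x₀, hx₀S⟩)


/-- `f` is affine on the set `s`. -/
def AffOn (f : ℝ → ℝ) (s : Set ℝ) : Prop := ∃ a c : ℝ, ∀ y ∈ s, f y = a * y + c

/-- Left derivative of `f` at `x`. -/
noncomputable def lDeriv (f : ℝ → ℝ) (x : ℝ) : ℝ := derivWithin f (Set.Iio x) x

/-- Right derivative of `f` at `x`. -/
noncomputable def rDeriv (f : ℝ → ℝ) (x : ℝ) : ℝ := derivWithin f (Set.Ioi x) x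

/-- `f` is piecewise affine with partition points `x 1 < x 2 < … < x N`
(no partition points if `N = 0`, in which case `f` is affine on all of `ℝ`). -/
def PWAff (f : ℝ → ℝ) (N : ℕ) (x : ℕ → ℝ) : Prop :=
  (∀ i, 1 ≤ i → i + 1 ≤ N → x i < x (i + 1)) ∧
  (N = 0 → AffOn f Set.univ) ∧
  (1 ≤ N → AffOn f (Set.Iic (x 1)) ∧ AffOn f (Set.Ici (x N)) ∧
    ∀ i, 1 ≤ i → i + 1 ≤ N → AffOn f (Set.Icc (x i) (x (i + 1))))

/-- `f` belongs to class `H` as witnessed by the points `x 1 < … < x N`: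
piecewise linear, concave on `ℝ`, and eventually constant. -/
def ClassHAux (f : ℝ → ℝ) (N : ℕ) (x : ℕ → ℝ) : Prop :=
  PWAff f N x ∧ ConcaveOn ℝ Set.univ f ∧ ∃ xb : ℝ, ∀ y, xb ≤ y → f y = f xb

/-- `f` belongs to class `H`. -/
def ClassH (f : ℝ → ℝ) : Prop := ∃ N x, ClassHAux f N x

/-- `x 1 < … < x N` are the singular values of the class-`H` function `f`:
they partition `ℝ` into pieces on which `f` is affine and each of them is a genuine
kink, i.e. the right derivative is strictly smaller than the left derivative there. -/
def HasSingVals (f : ℝ → ℝ) (N : ℕ) (x : ℕ → ℝ) : Prop :=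
  ClassHAux f N x ∧ ∀ i, 1 ≤ i → i ≤ N → rDeriv f (x i) < lDeriv f (x i)

/-- The dynamic-programming objective
`H(w,b) = R⁻¹ (p f(wR + b(u−R)) + (1−p) g(wR + b(d−R)))`. -/
noncomputable def Hfun (R u d p : ℝ) (f g : ℝ → ℝ) (w b : ℝ) : ℝ :=
  R⁻¹ * (p * f (w * R + b * (u - R)) + (1 - p) * g (w * R + b * (d - R)))

/-- The value function `V(w) = sup_b H(w,b)`. -/
noncomputable def Vfun (R u d p : ℝ) (f g : ℝ → ℝ) (w : ℝ) : ℝ :=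
  ⨆ b : ℝ, Hfun R u d p f g w b

/-- The set of maximizers `B(w) = {b : H(w,b) = V(w)}`. -/
noncomputable def Bset (R u d p : ℝ) (f g : ℝ → ℝ) (w : ℝ) : Set ℝ :=
  {b : ℝ | Hfun R u d p f g w b = Vfun R u d p f g w}

/-- The minimal optimal strategy `β(w) = min B(w)`. -/
noncomputable def betaFun (R u d p : ℝ) (f g : ℝ → ℝ) (w : ℝ) : ℝ :=
  sInf (Bset R u d p f g w)

/-- The grid line `C^u = {(w,b) : wR + b(u−R) = c}`. -/
def Cu (R u : ℝ) (c : ℝ) : Set (ℝ × ℝ) := {pt | pt.1 * R + pt.2 * (u - R) = c}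

/-- The grid line `C^d = {(w,b) : wR + b(d−R) = c}`. -/
def Cd (R d : ℝ) (c : ℝ) : Set (ℝ × ℝ) := {pt | pt.1 * R + pt.2 * (d - R) = c}

/-- The grid `G`, the union of the lines `C^u_i`, `1 ≤ i ≤ Nu`, and `C^d_j`, `1 ≤ j ≤ Nd`. -/
def Grid (R u d : ℝ) (Nu : ℕ) (xu : ℕ → ℝ) (Nd : ℕ) (xd : ℕ → ℝ) : Set (ℝ × ℝ) :=
  (⋃ i ∈ Finset.Icc 1 Nu, Cu R u (xu i)) ∪ (⋃ j ∈ Finset.Icc 1 Nd, Cd R d (xd j))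

/-- The open parallelogram `D_ij`, for `0 ≤ i ≤ Nu`, `0 ≤ j ≤ Nd`, with the conventions
`x^u_0 = x^d_0 = −∞` and `x^u_{Nu+1} = x^d_{Nd+1} = +∞`. -/
def Dset (R u d : ℝ) (Nu : ℕ) (xu : ℕ → ℝ) (Nd : ℕ) (xd : ℕ → ℝ) (i j : ℕ) : Set (ℝ × ℝ) :=
  {pt | (1 ≤ i → xu i < pt.1 * R + pt.2 * (u - R)) ∧
        (i < Nu → pt.1 * R + pt.2 * (u - R) < xu (i + 1)) ∧
        (1 ≤ j → xd j < pt.1 * R + pt.2 * (d - R)) ∧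
        (j < Nd → pt.1 * R + pt.2 * (d - R) < xd (j + 1))}

/-- For non-constant class-`H` functions `f₁, f₂`, positive `c₁, c₂` and
`c₃ c₅ < 0`, the set of global maximizers of
`f(x) = c₁ f₁(c₃ x + c₄) + c₂ f₂(c₅ x + c₆)` is a nonempty compact interval. -/
theorem stmt_3 (f₁ f₂ : ℝ → ℝ) (hf₁ : ClassH f₁) (hf₂ : ClassH f₂)
    (hnc₁ : ∃ a b : ℝ, f₁ a ≠ f₁ b) (hnc₂ : ∃ a b : ℝ, f₂ a ≠ f₂ b)
    (c₁ c₂ c₃ c₄ c₅ c₆ : ℝ) (hc₁ : 0 < c₁) (hc₂ : 0 < c₂) (hc₃₅ : c₃ * c₅ < 0)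
    (f : ℝ → ℝ) (hf : ∀ x, f x = c₁ * f₁ (c₃ * x + c₄) + c₂ * f₂ (c₅ * x + c₆)) :
    ({x : ℝ | ∀ y : ℝ, f y ≤ f x}).Nonempty ∧
    IsCompact {x : ℝ | ∀ y : ℝ, f y ≤ f x} ∧
    ∃ a b : ℝ, {x : ℝ | ∀ y : ℝ, f y ≤ f x} = Set.Icc a b := by
  -- extract concavity and eventual-constancy witnesses
  obtain ⟨N₁, xs₁, _, hcv₁, xb₁, hxb₁⟩ := hf₁
  obtain ⟨N₂, xs₂, _, hcv₂, xb₂, hxb₂⟩ := hf₂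
  obtain ⟨m₁, k₁, hm₁, hlin₁⟩ := auxH_lin f₁ hcv₁ xb₁ hxb₁ hnc₁
  obtain ⟨m₂, k₂, hm₂, hlin₂⟩ := auxH_lin f₂ hcv₂ xb₂ hxb₂ hnc₂
  -- concavity of f
  have hconc : ConcaveOn ℝ Set.univ f := by
    refine ⟨convex_univ, fun x _ y _ a b ha hb hab => ?_⟩
    simp only [smul_eq_mul]
    have e1 : c₃ * (a * x + b * y) + c₄ = a * (c₃ * x + c₄) + b * (c₃ * y + c₄) := by
      linear_combination (-c₄) * hab
    have e2 : c₅ * (a * x + b * y) + c₆ = a * (c₅ * x + c₆) + b * (c₅ * y + c₆) := by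
      linear_combination (-c₆) * hab
    have H1 := hcv₁.2 (Set.mem_univ (c₃ * x + c₄)) (Set.mem_univ (c₃ * y + c₄)) ha hb hab
    have H2 := hcv₂.2 (Set.mem_univ (c₅ * x + c₆)) (Set.mem_univ (c₅ * y + c₆)) ha hb hab
    simp only [smul_eq_mul] at H1 H2
    rw [← e1] at H1
    rw [← e2] at H2
    rw [hf, hf, hf]
    nlinarith [mul_le_mul_of_nonneg_left H1 hc₁.le, mul_le_mul_of_nonneg_left H2 hc₂.le]
  have hcont : Continuous f := continuousOn_univ.mp (hconc.continuousOn isOpen_univ)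
  -- linear bounds with slopes of opposite signs
  obtain ⟨p, q, r, s, hp, hr, hb1, hb2⟩ :
      ∃ p q r s : ℝ, 0 < p ∧ r < 0 ∧ (∀ x, f x ≤ p * x + q) ∧ (∀ x, f x ≤ r * x + s) := by
    have hsgn : (0 < c₃ ∧ c₅ < 0) ∨ (c₃ < 0 ∧ 0 < c₅) := by
      rcases lt_trichotomy c₃ 0 with h | h | h
      · refine Or.inr ⟨h, ?_⟩; nlinarith
      · rw [h] at hc₃₅; simp at hc₃₅
      · refine Or.inl ⟨h, ?_⟩; nlinarith
    rcases hsgn with ⟨h3, h5⟩ | ⟨h3, h5⟩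
    · refine ⟨c₁ * m₁ * c₃, c₁ * (m₁ * c₄ + k₁) + c₂ * k₂,
        c₂ * m₂ * c₅, c₁ * k₁ + c₂ * (m₂ * c₆ + k₂), by positivity, mul_neg_of_pos_of_neg (mul_pos hc₂ hm₂) h5, ?_, ?_⟩
      · intro x
        rw [hf]
        nlinarith [mul_le_mul_of_nonneg_left (hlin₁ (c₃ * x + c₄)).1 hc₁.le,
          mul_le_mul_of_nonneg_left (hlin₂ (c₅ * x + c₆)).2 hc₂.le]
      · intro x
        rw [hf]
        nlinarith [mul_le_mul_of_nonneg_left (hlin₁ (c₃ * x + c₄)).2 hc₁.le,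
          mul_le_mul_of_nonneg_left (hlin₂ (c₅ * x + c₆)).1 hc₂.le]
    · refine ⟨c₂ * m₂ * c₅, c₁ * k₁ + c₂ * (m₂ * c₆ + k₂),
        c₁ * m₁ * c₃, c₁ * (m₁ * c₄ + k₁) + c₂ * k₂, by positivity, mul_neg_of_pos_of_neg (mul_pos hc₁ hm₁) h3, ?_, ?_⟩
      · intro x
        rw [hf]
        nlinarith [mul_le_mul_of_nonneg_left (hlin₁ (c₃ * x + c₄)).2 hc₁.le,
          mul_le_mul_of_nonneg_left (hlin₂ (c₅ * x + c₆)).1 hc₂.le]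
      · intro x
        rw [hf]
        nlinarith [mul_le_mul_of_nonneg_left (hlin₁ (c₃ * x + c₄)).1 hc₁.le,
          mul_le_mul_of_nonneg_left (hlin₂ (c₅ * x + c₆)).2 hc₂.le]
  exact aux_main f hconc hcont p q r s hp hr hb1 hb2
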